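/- Let Φ be the standard normal CDF with density φ, and fix y ∈ {0,1}. Define l(x) = y·log Φ(x) + (1−y)·log(1−Φ(x)). Then the second derivative l''(x) is strictly negative for all x ∈ ℝ; that is, the probit log-likelihood contribution is strictly concave in the linear index. -/

import Mathlib

open Real MeasureTheory Filter Set Topology

noncomputable def gss (t : ℝ) : ℝ := (Real.sqrt (2 * π))⁻¹ * Real.exp (-t ^ 2 / 2)

noncomputable def Phi (x : ℝ) : ℝ := ∫ t in Set.Iic x, gss t

lemma gss_pos (t : ℝ) : 0 < gss t := by
  have h2π : (0:ℝ) < 2 * π := by positivity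
  exact mul_pos (inv_pos.2 (Real.sqrt_pos.2 h2π)) (Real.exp_pos _)

lemma gss_eq : gss = fun t => (Real.sqrt (2*π))⁻¹ * Real.exp (-(2⁻¹) * t ^ 2) := by
  funext t
  simp only [gss]
  ring_nf

lemma gss_continuous : Continuous gss := by
  unfold gss; fun_prop

lemma gss_integrable : Integrable gss := by
  rw [gss_eq]
  exact (integrable_exp_neg_mul_sq (by norm_num)).const_mul _

lemma gss_integral : ∫ t, gss t = 1 := by
  rw [gss_eq, MeasureTheory.integral_const_mul, integral_gaussian,
    show π / 2⁻¹ = 2 * π by ring]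
  exact inv_mul_cancel₀ (by positivity : Real.sqrt (2*π) ≠ 0)

lemma gss_hasDerivAt (x : ℝ) : HasDerivAt gss (-x * gss x) x := by
  have h1 : HasDerivAt (fun t : ℝ => -t ^ 2 / 2) (-x) x := by
    have := ((hasDerivAt_pow 2 x).neg).div_const 2
    refine this.congr_deriv ?_
    norm_num; ring
  have h2 := (h1.exp).const_mul ((Real.sqrt (2*π))⁻¹)
  have : HasDerivAt (fun t : ℝ => (Real.sqrt (2*π))⁻¹ * Real.exp (-t ^ 2 / 2))
      (-x * gss x) x := by
    refine h2.congr_deriv ?_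
    simp only [gss]; ring
  exact this

lemma sq_tendsto_atTop : Tendsto (fun t : ℝ => t ^ 2) atTop atTop :=
  tendsto_pow_atTop (by norm_num)

lemma sq_tendsto_atBot : Tendsto (fun t : ℝ => t ^ 2) atBot atTop := by
  have := (tendsto_pow_atTop (n := 2) (by norm_num)).comp tendsto_neg_atBot_atTop (α := ℝ)
  refine this.congr fun t => ?_
  simp [neg_pow]

lemma gss_tendsto {l : Filter ℝ} (h : Tendsto (fun t : ℝ => t ^ 2) l atTop) :
    Tendsto gss l (𝓝 0) := by
  have h1 : Tendsto (fun t : ℝ => -t ^ 2 / 2) l atBot := by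
    apply Tendsto.atBot_div_const (by norm_num : (0:ℝ) < 2)
    exact tendsto_neg_atTop_atBot.comp h
  have h2 : Tendsto (fun t : ℝ => Real.exp (-t ^ 2 / 2)) l (𝓝 0) :=
    Real.tendsto_exp_atBot.comp h1
  have h3 := h2.const_mul ((Real.sqrt (2*π))⁻¹)
  rw [mul_zero] at h3
  exact h3

lemma integrable_id_mul_gss : Integrable (fun t : ℝ => t * gss t) := by
  have h := (integrable_mul_exp_neg_mul_sq (by norm_num : (0:ℝ) < 2⁻¹)).const_mul
    ((Real.sqrt (2*π))⁻¹)
  refine h.congr (Filter.Eventually.of_forall fun t => ?_)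
  simp only [gss]
  ring_nf

lemma integral_Iic_id_mul_gss (x : ℝ) : ∫ t in Set.Iic x, t * gss t = -gss x := by
  have h := integral_Iic_of_hasDerivAt_of_tendsto' (f := fun t => -gss t)
    (f' := fun t => t * gss t) (a := x) (m := 0)
    (fun t _ => by exact (gss_hasDerivAt t).neg.congr_deriv (by ring))
    integrable_id_mul_gss.integrableOn
    (by simpa using (gss_tendsto sq_tendsto_atBot).neg)
  simpa using h

lemma integral_Ioi_id_mul_gss (x : ℝ) : ∫ t in Set.Ioi x, t * gss t = gss x := by
  have h := integral_Ioi_of_hasDerivAt_of_tendsto' (f := fun t => -gss t)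
    (f' := fun t => t * gss t) (a := x) (m := 0)
    (fun t _ => by exact (gss_hasDerivAt t).neg.congr_deriv (by ring))
    integrable_id_mul_gss.integrableOn
    (by simpa using (gss_tendsto sq_tendsto_atTop).neg)
  simpa using h

lemma Phi_pos (x : ℝ) : 0 < Phi x := by
  refine (setIntegral_pos_iff_support_of_nonneg_ae
    (Filter.Eventually.of_forall fun t => (gss_pos t).le)
    gss_integrable.integrableOn).mpr ?_
  have hsub : Set.Iio x ⊆ Function.support gss ∩ Set.Iic x := fun t ht =>
    ⟨ne_of_gt (gss_pos t), Set.mem_Iic.mpr (le_of_lt (Set.mem_Iio.mp ht))⟩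
  calc (0:ENNReal) < volume (Set.Iio x) := by rw [Real.volume_Iio]; exact ENNReal.zero_lt_top
    _ ≤ _ := measure_mono hsub

lemma one_sub_Phi (x : ℝ) : 1 - Phi x = ∫ t in Set.Ioi x, gss t := by
  have h := intervalIntegral.integral_Iic_add_Ioi (b := x) (f := gss) (μ := volume)
    gss_integrable.integrableOn gss_integrable.integrableOn
  rw [gss_integral] at h
  have : Phi x = ∫ t in Set.Iic x, gss t := rfl
  linarith

lemma Phi_lt_one (x : ℝ) : Phi x < 1 := by
  have h : 0 < ∫ t in Set.Ioi x, gss t := by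
    refine (setIntegral_pos_iff_support_of_nonneg_ae
      (Filter.Eventually.of_forall fun t => (gss_pos t).le)
      gss_integrable.integrableOn).mpr ?_
    have hsub : Set.Ioi x ⊆ Function.support gss ∩ Set.Ioi x := fun t ht =>
      ⟨ne_of_gt (gss_pos t), ht⟩
    calc (0:ENNReal) < volume (Set.Ioi x) := by rw [Real.volume_Ioi]; exact ENNReal.zero_lt_top
      _ ≤ _ := measure_mono hsub
  have := one_sub_Phi x
  linarith

lemma hasDerivAt_Phi (x : ℝ) : HasDerivAt Phi (gss x) x := by
  have heq : Phi = fun u => Phi 0 + ∫ t in (0:ℝ)..u, gss t := by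
    funext u
    rw [← intervalIntegral.integral_Iic_sub_Iic gss_integrable.integrableOn
      gss_integrable.integrableOn]
    simp [Phi]
  rw [heq]
  exact (intervalIntegral.integral_hasDerivAt_right
    gss_integrable.intervalIntegrable
    (gss_continuous.stronglyMeasurableAtFilter _ _)
    gss_continuous.continuousAt).const_add (Phi 0)

lemma mills_neg (x : ℝ) : 0 < x * Phi x + gss x := by
  have hint1 : IntegrableOn (fun t => x * gss t) (Set.Iic x) :=
    gss_integrable.integrableOn.const_mul x
  have hint2 : IntegrableOn (fun t => t * gss t) (Set.Iic x) :=
    integrable_id_mul_gss.integrableOn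
  have hint : IntegrableOn (fun t => (x - t) * gss t) (Set.Iic x) := by
    refine (hint1.sub hint2).congr (Filter.Eventually.of_forall fun t => ?_)
    simp only [Pi.sub_apply]; ring
  have key : x * Phi x + gss x = ∫ t in Set.Iic x, (x - t) * gss t := by
    have h1 : ∫ t in Set.Iic x, (x - t) * gss t =
        (∫ t in Set.Iic x, x * gss t) - ∫ t in Set.Iic x, t * gss t := by
      rw [← integral_sub hint1 hint2]
      congr 1; funext t; ring
    rw [h1, MeasureTheory.integral_const_mul, integral_Iic_id_mul_gss]
    have : Phi x = ∫ t in Set.Iic x, gss t := rfl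
    rw [← this]; ring
  rw [key]
  refine (setIntegral_pos_iff_support_of_nonneg_ae ?_ hint).mpr ?_
  · filter_upwards [ae_restrict_mem measurableSet_Iic] with t ht
    exact mul_nonneg (by simp only [Set.mem_Iic] at ht; linarith) (gss_pos t).le
  · have hsub : Set.Iio x ⊆ Function.support (fun t => (x - t) * gss t) ∩ Set.Iic x := by
      intro t ht
      simp only [Set.mem_Iio] at ht
      exact ⟨ne_of_gt (mul_pos (by linarith) (gss_pos t)), le_of_lt ht⟩
    calc (0:ENNReal) < volume (Set.Iio x) := by rw [Real.volume_Iio]; exact ENNReal.zero_lt_top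
      _ ≤ _ := measure_mono hsub

lemma mills_pos (x : ℝ) : x * (1 - Phi x) < gss x := by
  have hint1 : IntegrableOn (fun t => t * gss t) (Set.Ioi x) :=
    integrable_id_mul_gss.integrableOn
  have hint2 : IntegrableOn (fun t => x * gss t) (Set.Ioi x) :=
    gss_integrable.integrableOn.const_mul x
  have hint : IntegrableOn (fun t => (t - x) * gss t) (Set.Ioi x) := by
    refine (hint1.sub hint2).congr (Filter.Eventually.of_forall fun t => ?_)
    simp only [Pi.sub_apply]; ring
  have key : gss x - x * (1 - Phi x) = ∫ t in Set.Ioi x, (t - x) * gss t := by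
    have h1 : ∫ t in Set.Ioi x, (t - x) * gss t =
        (∫ t in Set.Ioi x, t * gss t) - ∫ t in Set.Ioi x, x * gss t := by
      rw [← integral_sub hint1 hint2]
      congr 1; funext t; ring
    rw [h1, MeasureTheory.integral_const_mul, integral_Ioi_id_mul_gss, ← one_sub_Phi]
  have hpos : 0 < ∫ t in Set.Ioi x, (t - x) * gss t := by
    refine (setIntegral_pos_iff_support_of_nonneg_ae ?_ hint).mpr ?_
    · filter_upwards [ae_restrict_mem measurableSet_Ioi] with t ht
      exact mul_nonneg (by simp only [Set.mem_Ioi] at ht; linarith) (gss_pos t).le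
    · have hsub : Set.Ioi x ⊆ Function.support (fun t => (t - x) * gss t) ∩ Set.Ioi x := by
        intro t ht
        simp only [Set.mem_Ioi] at ht
        exact ⟨ne_of_gt (mul_pos (by linarith) (gss_pos t)), ht⟩
      calc (0:ENNReal) < volume (Set.Ioi x) := by rw [Real.volume_Ioi]; exact ENNReal.zero_lt_top
        _ ≤ _ := measure_mono hsub
  linarith

/-- the probit log-likelihood contribution is strictly concave:
`l''(x) < 0` for all real `x`, where `l(x) = y log Φ(x) + (1-y) log(1-Φ(x))`
and `Φ` is the standard normal CDF. -/
theorem stmt_3 (Φ : ℝ → ℝ)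
    (hΦ : ∀ x, Φ x = ∫ t in Set.Iic x, (Real.sqrt (2 * π))⁻¹ * Real.exp (-t ^ 2 / 2))
    (y : ℝ) (hy : y ∈ ({0, 1} : Set ℝ))
    (l : ℝ → ℝ) (hl : ∀ x, l x = y * Real.log (Φ x) + (1 - y) * Real.log (1 - Φ x)) :
    ∀ x : ℝ, deriv (deriv l) x < 0 := by
  have hΦP : Φ = Phi := funext fun x => by rw [hΦ x]; rfl
  subst hΦP
  simp only [Set.mem_insert_iff, Set.mem_singleton_iff] at hy
  rcases hy with rfl | rfl
  · -- y = 0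
    have hl' : l = fun x => Real.log (1 - Phi x) := funext fun x => by rw [hl x]; ring
    subst hl'
    have hd1 : ∀ x : ℝ, HasDerivAt (fun x => Real.log (1 - Phi x)) (-gss x / (1 - Phi x)) x := by
      intro x
      have h := ((hasDerivAt_Phi x).const_sub 1).log (by have := Phi_lt_one x; intro h; linarith [sub_eq_zero.mp h])
      simpa using h
    have hderiv1 : deriv (fun x => Real.log (1 - Phi x)) = fun x => -gss x / (1 - Phi x) :=
      funext fun x => (hd1 x).deriv
    rw [hderiv1]
    intro x
    have hne : 1 - Phi x ≠ 0 := by have := Phi_lt_one x; intro h; linarith [sub_eq_zero.mp h]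
    have htop : HasDerivAt (fun x : ℝ => -gss x) (x * gss x) x := by
      exact (gss_hasDerivAt x).neg.congr_deriv (by ring)
    have hbot : HasDerivAt (fun x : ℝ => 1 - Phi x) (-gss x) x := by
      simpa using (hasDerivAt_Phi x).const_sub 1
    have h := htop.div hbot hne
    show deriv ((fun x => -gss x) / fun x => 1 - Phi x) x < 0
    rw [h.deriv]
    apply div_neg_of_neg_of_pos
    · have h1 := mills_pos x
      have h2 := gss_pos x
      nlinarith [mul_pos h2 (sub_pos.mpr h1)]
    · positivity
  · -- y = 1
    have hl' : l = fun x => Real.log (Phi x) := funext fun x => by rw [hl x]; ring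
    subst hl'
    have hd1 : ∀ x : ℝ, HasDerivAt (fun x => Real.log (Phi x)) (gss x / Phi x) x :=
      fun x => (hasDerivAt_Phi x).log (ne_of_gt (Phi_pos x))
    have hderiv1 : deriv (fun x => Real.log (Phi x)) = fun x => gss x / Phi x :=
      funext fun x => (hd1 x).deriv
    rw [hderiv1]
    intro x
    have hne : Phi x ≠ 0 := ne_of_gt (Phi_pos x)
    have h := (gss_hasDerivAt x).div (hasDerivAt_Phi x) hne
    show deriv (gss / Phi) x < 0
    rw [h.deriv]
    apply div_neg_of_neg_of_pos
    · have h1 := mills_neg x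
      have h2 := gss_pos x
      nlinarith [mul_pos h2 h1]
    · positivity
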